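/- Let k be an algebraically closed field, n ≥ 1, and r₁,…,rₙ positive integers coprime to the characteristic of k. Let R = lcm(r₁,…,rₙ) and let C ⊂ 𝔸^{n+1} be the affine scheme defined by y₁^{r₁} = x, …, yₙ^{rₙ} = x. Then C has exactly (r₁⋯rₙ)/R irreducible components. -/

import Mathlib

open MvPolynomial

namespace CardFiberCurveAux
noncomputable section
variable {k : Type*} [Field k] {n : ℕ}
def RR (r : Fin n → ℕ) : ℕ := Finset.univ.lcm r
def dd (r : Fin n → ℕ) (i : Fin n) : ℕ := RR r / r i
variable (r : Fin n → ℕ) (hn : 0 < n) (hr : ∀ i, 0 < r i)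

lemma r_dvd_RR (i : Fin n) : r i ∣ RR r := Finset.dvd_lcm (Finset.mem_univ i)

include hr in
lemma RR_pos : 0 < RR r := by
  rcases Nat.eq_zero_or_pos (RR r) with h | h
  · rw [RR, Finset.lcm_eq_zero_iff] at h
    obtain ⟨i, -, hi⟩ := h
    exact absurd hi (hr i).ne'
  · exact h

lemma dd_mul_r (i : Fin n) : dd r i * r i = RR r := Nat.div_mul_cancel (r_dvd_RR r i)

lemma dd_dvd_RR (i : Fin n) : dd r i ∣ RR r := ⟨r i, (dd_mul_r r i).symm⟩

include hr in
lemma dd_pos (i : Fin n) : 0 < dd r i :=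
  Nat.div_pos (Nat.le_of_dvd (RR_pos r hr) (r_dvd_RR r i)) (hr i)

include hn hr in
lemma gcd_dd : Finset.univ.gcd (dd r) = 1 := by
  set g := Finset.univ.gcd (dd r) with hg
  have hgd : ∀ i, g ∣ dd r i := fun i => Finset.gcd_dvd (Finset.mem_univ i)
  have hgR : g ∣ RR r := (hgd ⟨0, hn⟩).trans (dd_dvd_RR r _)
  have hdvd : ∀ i : Fin n, r i ∣ RR r / g := by
    intro i
    obtain ⟨m, hm⟩ := hgd i
    have : RR r = g * (m * r i) := by rw [← dd_mul_r r i, hm]; ring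
    refine ⟨m, ?_⟩
    rw [this, Nat.mul_div_cancel_left _ (Nat.pos_of_ne_zero ?_), mul_comm]
    intro h0
    apply (dd_pos r hr i).ne'
    rw [hm, h0, zero_mul]
  have hRd : RR r ∣ RR r / g := Finset.lcm_dvd fun i _ => hdvd i
  have hdR : RR r / g ∣ RR r := Nat.div_dvd_of_dvd hgR
  have heq : RR r / g = RR r := Nat.dvd_antisymm hdR hRd
  have h2 : RR r * g = RR r * 1 := by
    conv_rhs => rw [mul_one, ← Nat.div_mul_cancel hgR, heq]
  exact Nat.eq_of_mul_eq_mul_left (RR_pos r hr) h2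

lemma exists_bezout {ι : Type*} [DecidableEq ι] (s : Finset ι) (f : ι → ℕ) :
    ∃ c : ι → ℤ, ∑ i ∈ s, c i * f i = s.gcd f := by
  induction s using Finset.induction_on with
  | empty => exact ⟨0, by simp⟩
  | insert a s ha ih =>
    obtain ⟨c, hc⟩ := ih
    set x := f a
    set y := (s.gcd f : ℕ)
    refine ⟨fun i => if i = a then Nat.gcdA x y else Nat.gcdB x y * c i, ?_⟩
    rw [Finset.sum_insert ha, Finset.gcd_insert]
    have hb : ((Nat.gcd x y : ℕ) : ℤ) = x * Nat.gcdA x y + y * Nat.gcdB x y :=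
      Nat.gcd_eq_gcd_ab x y
    have hsum : ∑ i ∈ s, (if i = a then Nat.gcdA x y else Nat.gcdB x y * c i) * f i
        = Nat.gcdB x y * ∑ i ∈ s, c i * f i := by
      rw [Finset.mul_sum]
      refine Finset.sum_congr rfl fun i hi => ?_
      rw [if_neg (by rintro rfl; exact ha hi)]; ring
    beta_reduce
    rw [if_pos rfl, hsum, hc]
    have hgg : gcd x y = Nat.gcd x y := rfl
    rw [hgg, hb]; push_cast; ring

include hn hr in
lemma exists_bstar : ∃ b : Fin n → ℕ, (∑ i, dd r i * b i) ≡ 1 [MOD RR r] := by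
  obtain ⟨c, hc⟩ := exists_bezout (Finset.univ : Finset (Fin n)) (dd r)
  rw [gcd_dd r hn hr] at hc
  set R := RR r with hR
  have hR0 : (R : ℤ) ≠ 0 := by exact_mod_cast (RR_pos r hr).ne'
  refine ⟨fun i => (c i % R).toNat, ?_⟩
  rw [← ZMod.natCast_eq_natCast_iff]
  push_cast
  have : ∀ i : Fin n, (((c i % (R:ℤ)).toNat : ℕ) : ZMod R) = (c i : ZMod R) := by
    intro i
    have h1 : (((c i % (R:ℤ)).toNat : ℕ) : ℤ) = c i % (R:ℤ) :=
      Int.toNat_of_nonneg (Int.emod_nonneg _ hR0)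
    calc (((c i % (R:ℤ)).toNat : ℕ) : ZMod R) = ((((c i % (R:ℤ)).toNat : ℕ) : ℤ) : ZMod R) := by
          push_cast; ring
      _ = (c i : ZMod R) := by rw [h1, ZMod.intCast_mod]
  have h2 : (∑ i, (dd r i : ZMod R) * (((c i % (R:ℤ)).toNat : ℕ) : ZMod R))
      = ∑ i, (dd r i : ZMod R) * (c i : ZMod R) := by
    refine Finset.sum_congr rfl fun i _ => by rw [this i]
  calc ∑ i, (dd r i : ZMod R) * (((c i % (R:ℤ)).toNat : ℕ) : ZMod R)
      = ∑ i, ((c i : ZMod R) * (dd r i : ZMod R)) := by rw [h2]; exact Finset.sum_congr rfl fun i _ => mul_comm _ _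
    _ = ((∑ i, c i * (dd r i : ℤ) : ℤ) : ZMod R) := by push_cast; ring
    _ = 1 := by rw [hc]; norm_num

/-- the group of tuples of roots of unity. -/
abbrev GG (k : Type*) [Field k] {n : ℕ} (r : Fin n → ℕ) := (i : Fin n) → rootsOfUnity (r i) k

/-- The ideal cutting out the curve. -/
def II (k : Type*) [Field k] {n : ℕ} (r : Fin n → ℕ) : Ideal (MvPolynomial (Fin (n + 1)) k) :=
  Ideal.span (Set.range fun i : Fin n => (X i.succ : MvPolynomial (Fin (n + 1)) k) ^ r i - X 0)

/-- the parametrization of the component attached to `η`. -/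
def psi (r : Fin n → ℕ) (η : GG k r) : MvPolynomial (Fin (n + 1)) k →ₐ[k] Polynomial k :=
  aeval (Fin.cases (Polynomial.X ^ RR r)
    (fun i => Polynomial.C ((η i : kˣ) : k) * Polynomial.X ^ dd r i))

/-- the prime attached to `η`. -/
def PP (r : Fin n → ℕ) (η : GG k r) : Ideal (MvPolynomial (Fin (n + 1)) k) :=
  RingHom.ker (psi r η)

/-- the degree of the image of a monomial. -/
def deg (r : Fin n → ℕ) (m : Fin (n + 1) →₀ ℕ) : ℕ :=
  RR r * m 0 + ∑ i, dd r i * m i.succ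

/-- normal form of a monomial modulo `II`. -/
def NF (r : Fin n → ℕ) (m : Fin (n + 1) →₀ ℕ) : Fin (n + 1) →₀ ℕ :=
  Finsupp.equivFunOnFinite.symm
    (Fin.cases (m 0 + ∑ i, m i.succ / r i) (fun i => m i.succ % r i))

/-- the character attached to an exponent vector. -/
def chi (r : Fin n → ℕ) (b : Fin n → ℕ) : GG k r →* Polynomial k where
  toFun η := Polynomial.C (∏ i, ((η i : kˣ) : k) ^ b i)
  map_one' := by simp
  map_mul' η η' := by
    simp [mul_pow, Finset.prod_mul_distrib]

lemma NF_apply_zero (m : Fin (n + 1) →₀ ℕ) :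
    NF r m 0 = m 0 + ∑ i, m i.succ / r i := by
  simp [NF, Finsupp.coe_equivFunOnFinite_symm]

lemma NF_apply_succ (m : Fin (n + 1) →₀ ℕ) (i : Fin n) :
    NF r m i.succ = m i.succ % r i := by
  simp [NF, Finsupp.coe_equivFunOnFinite_symm]

lemma eta_pow (η : GG k r) (i : Fin n) : ((η i : kˣ) : k) ^ r i = 1 := by
  have h : ((η i : kˣ)) ^ r i = 1 := (mem_rootsOfUnity _ _).mp (η i).2
  have h2 := congrArg (Units.val) h
  push_cast at h2
  simpa using h2

lemma psi_X0 (η : GG k r) : psi r η (X 0) = Polynomial.X ^ RR r := by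
  simp [psi]

lemma psi_Xsucc (η : GG k r) (i : Fin n) :
    psi r η (X i.succ) = Polynomial.C ((η i : kˣ) : k) * Polynomial.X ^ dd r i := by
  simp [psi]

lemma psi_monomial (η : GG k r) (m : Fin (n + 1) →₀ ℕ) (c : k) :
    psi r η (monomial m c) =
      Polynomial.C (c * ∏ i, ((η i : kˣ) : k) ^ m i.succ) * Polynomial.X ^ deg r m := by
  rw [psi, aeval_monomial, Finsupp.prod_fintype _ _ (fun i => pow_zero _), Fin.prod_univ_succ]
  simp only [Fin.cases_zero, Fin.cases_succ]
  rw [deg, pow_add, ← pow_mul]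
  have : ∀ i : Fin n, (Polynomial.C ((η i : kˣ) : k) * Polynomial.X ^ dd r i) ^ m i.succ
      = Polynomial.C (((η i : kˣ) : k) ^ m i.succ) * Polynomial.X ^ (dd r i * m i.succ) := by
    intro i; rw [mul_pow, ← Polynomial.C_pow, ← pow_mul]
  rw [Finset.prod_congr rfl fun i _ => this i, Finset.prod_mul_distrib, ← map_prod,
    ← Finset.prod_pow_eq_pow_sum]
  simp only [Polynomial.algebraMap_eq, map_mul]
  ring

lemma II_le_PP (η : GG k r) : II k r ≤ PP r η := by
  rw [II, Ideal.span_le]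
  rintro _ ⟨i, rfl⟩
  simp only [SetLike.mem_coe, PP, RingHom.mem_ker]
  rw [map_sub, map_pow, psi_Xsucc, psi_X0, mul_pow, ← Polynomial.C_pow, eta_pow,
    ← pow_mul, dd_mul_r]
  simp

section algclosed
variable [IsAlgClosed k] (hchar : ∀ i, ¬ (ringChar k ∣ r i))

include hr hchar in
lemma chi_inj {b b' : Fin n → ℕ} (hb : ∀ i, b i < r i) (hb' : ∀ i, b' i < r i)
    (h : (chi r b : GG k r →* Polynomial k) = chi r b') : b = b' := by
  funext i
  haveI : NeZero (r i) := NeZero.of_pos (hr i)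
  haveI : NeZero ((r i : k)) := ⟨fun hc => hchar i ((ringChar.spec k (r i)).mp hc)⟩
  obtain ⟨ζ, hζ⟩ := HasEnoughRootsOfUnity.exists_primitiveRoot k (r i)
  classical
  set η : GG k r := Function.update (1 : GG k r) i hζ.toRootsOfUnity with hη
  have hval : ∀ j b0, ((η j : kˣ) : k) ^ b0 = if j = i then ζ ^ b0 else 1 := by
    intro j b0
    by_cases hj : j = i
    · subst hj
      rw [if_pos rfl, hη, Function.update_self, hζ.val_toRootsOfUnity_coe]
    · rw [if_neg hj, hη, Function.update_of_ne hj]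
      simp
  have hcv : ∀ bb : Fin n → ℕ, (chi r bb : GG k r →* Polynomial k) η
      = Polynomial.C (ζ ^ bb i) := by
    intro bb
    show Polynomial.C (∏ j, ((η j : kˣ) : k) ^ bb j) = _
    rw [Finset.prod_congr rfl fun j _ => hval j (bb j)]
    rw [Finset.prod_ite_eq' Finset.univ i (fun j => ζ ^ bb j)]
    simp
  have := congrArg (fun χ : GG k r →* Polynomial k => χ η) h
  simp only [hcv] at this
  exact hζ.pow_inj (hb i) (hb' i) (Polynomial.C_injective this)

include hr hchar in
lemma vanish (g : MvPolynomial (Fin (n + 1)) k)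
    (hsupp : ∀ m ∈ g.support, ∀ i : Fin n, m i.succ < r i)
    (hz : ∀ η : GG k r, psi r η g = 0) : g = 0 := by
  classical
  letI : DecidableEq (GG k r →* Polynomial k) := Classical.decEq _
  have key : ∀ m ∈ g.support, coeff m g = 0 := by
    intro m hm
    set bv : (Fin (n + 1) →₀ ℕ) → (Fin n → ℕ) := fun m' => (fun i => m' i.succ) with hbv
    set s : Finset (GG k r →* Polynomial k) := g.support.image (fun m' => chi r (bv m')) with hs
    set co : (GG k r →* Polynomial k) → Polynomial k := fun χ =>
      ∑ m' ∈ g.support.filter (fun m' => chi r (bv m') = χ),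
        Polynomial.C (coeff m' g) * Polynomial.X ^ deg r m' with hco
    have hkey : ∑ χ ∈ s, co χ • ((χ : GG k r → Polynomial k)) = 0 := by
      funext η
      simp only [Finset.sum_apply, Pi.smul_apply, smul_eq_mul, Pi.zero_apply]
      have step1 : ∀ χ ∈ s, co χ * χ η
          = ∑ m' ∈ g.support.filter (fun m' => chi r (bv m') = χ),
              (Polynomial.C (coeff m' g) * Polynomial.X ^ deg r m'
                * ((chi r (bv m') : GG k r →* Polynomial k) η)) := by
        intro χ hχ
        rw [hco, Finset.sum_mul]
        exact Finset.sum_congr rfl fun m'' hm'' => by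
          rw [(Finset.mem_filter.mp hm'').2]
      have hfib := Finset.sum_fiberwise_of_maps_to (g := fun m' => (chi r (bv m') : GG k r →* Polynomial k))
        (t := Finset.image (fun m' => chi r (bv m')) g.support)
        (fun m' hm' => Finset.mem_image_of_mem _ hm')
        (fun m' => Polynomial.C (coeff m' g) * Polynomial.X ^ deg r m'
          * ((chi r (bv m') : GG k r →* Polynomial k) η))
      refine ((Finset.sum_congr rfl step1).trans (hfib.trans ?_))
      have step2 : ∀ m' ∈ g.support,
          Polynomial.C (coeff m' g) * Polynomial.X ^ deg r m'
            * (chi r (bv m') : GG k r →* Polynomial k) η = psi r η (monomial m' (coeff m' g)) := by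
        intro m' _
        rw [psi_monomial]
        show _ * Polynomial.C (∏ i, ((η i : kˣ) : k) ^ bv m' i) = _
        rw [map_mul]
        ring
      rw [Finset.sum_congr rfl step2, ← map_sum]
      have : (∑ m' ∈ g.support, monomial m' (coeff m' g)) = g := (as_sum g).symm
      rw [this, hz η]
    have hall := linearIndependent_iff'.mp
      (linearIndependent_monoidHom (GG k r) (Polynomial k)) s co hkey
    have hcm : co (chi r (bv m)) = 0 :=
      hall _ (Finset.mem_image_of_mem (fun m' => (chi r (bv m') : GG k r →* Polynomial k)) hm)
    have hfil : g.support.filter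
          (fun m' => (chi r (bv m') : GG k r →* Polynomial k) = chi r (bv m))
        = g.support.filter (fun m' => bv m' = bv m) := by
      refine Finset.filter_congr fun m' hm' => ?_
      constructor
      · intro h
        exact chi_inj r hr hchar (fun i => hsupp m' hm' i) (fun i => hsupp m hm i) h
      · intro h; rw [h]
    rw [hco] at hcm
    beta_reduce at hcm
    rw [hfil] at hcm
    have := congrArg (fun p => Polynomial.coeff p (deg r m)) hcm
    simp only [Polynomial.finset_sum_coeff, Polynomial.coeff_zero] at this
    rw [Finset.sum_eq_single m] at this
    · rwa [Polynomial.coeff_C_mul, Polynomial.coeff_X_pow, if_pos rfl, mul_one] at this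
    · intro m' hm' hne
      rw [Finset.mem_filter] at hm'
      rw [Polynomial.coeff_C_mul, Polynomial.coeff_X_pow, if_neg, mul_zero]
      intro hdeg
      apply hne
      have hb0 : m' 0 = m 0 := by
        simp only [deg] at hdeg
        have h2 : (∑ i, dd r i * m' i.succ) = ∑ i, dd r i * m i.succ := by
          refine Finset.sum_congr rfl fun i _ => ?_
          rw [show m' i.succ = m i.succ from congrFun hm'.2 i]
        rw [← h2] at hdeg
        have h3 := Nat.add_right_cancel hdeg
        exact (Nat.eq_of_mul_eq_mul_left (RR_pos r hr) h3).symm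
      ext j
      refine Fin.cases ?_ ?_ j
      · exact hb0
      · exact fun i => congrFun hm'.2 i
    · intro hmm
      refine absurd (Finset.mem_filter.mpr ⟨hm, ?_⟩) hmm
      rfl
  ext m
  by_cases hm : m ∈ g.support
  · rw [key m hm]; simp
  · rw [notMem_support_iff.mp hm]; simp

end algclosed

include hr in
lemma red_mem (m : Fin (n + 1) →₀ ℕ) :
    (monomial m (1 : k) : MvPolynomial (Fin (n + 1)) k) - monomial (NF r m) 1 ∈ II k r := by
  classical
  generalize hN : (∑ i : Fin n, m i.succ) = N
  induction N using Nat.strong_induction_on generalizing m with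
  | _ N ih =>
  by_cases hred : ∀ i, m i.succ < r i
  · have hNF : NF r m = m := by
      ext j
      refine Fin.cases ?_ ?_ j
      · rw [NF_apply_zero]
        have h0 : ∀ i : Fin n, m i.succ / r i = 0 := fun i => Nat.div_eq_of_lt (hred i)
        simp [h0]
      · intro i; rw [NF_apply_succ, Nat.mod_eq_of_lt (hred i)]
    rw [hNF, sub_self]
    exact zero_mem _
  · push_neg at hred
    obtain ⟨i, hi⟩ := hred
    set m1 := m - Finsupp.single i.succ (r i) with hm1
    set m' := m1 + Finsupp.single 0 1 with hm'
    have hle : Finsupp.single i.succ (r i) ≤ m := by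
      rw [Finsupp.single_le_iff]; exact hi
    have hm1add : m1 + Finsupp.single i.succ (r i) = m := tsub_add_cancel_of_le hle
    -- component values of m'
    have hv0 : m' 0 = m 0 + 1 := by
      rw [hm', Finsupp.add_apply, hm1, Finsupp.tsub_apply]
      rw [Finsupp.single_apply, Finsupp.single_apply]
      rw [if_neg (Fin.succ_ne_zero i), if_pos rfl]
      simp
    have hvi : m' i.succ = m i.succ - r i := by
      rw [hm', Finsupp.add_apply, hm1, Finsupp.tsub_apply]
      rw [Finsupp.single_apply, Finsupp.single_apply]
      rw [if_pos rfl, if_neg (Fin.succ_ne_zero i).symm]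
      simp
    have hvj : ∀ j : Fin n, j ≠ i → m' j.succ = m j.succ := by
      intro j hj
      rw [hm', Finsupp.add_apply, hm1, Finsupp.tsub_apply]
      rw [Finsupp.single_apply, Finsupp.single_apply]
      rw [if_neg (fun h => hj (Fin.succ_injective n h).symm), if_neg (Fin.succ_ne_zero j).symm]
      simp
    have hdivsub : (m i.succ - r i) / r i = m i.succ / r i - 1 := by
      have h1 : m i.succ - r i + r i = m i.succ := Nat.sub_add_cancel hi
      have h2 : (m i.succ - r i + r i) / r i = (m i.succ - r i) / r i + 1 :=
        Nat.add_div_right _ (hr i)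
      rw [h1] at h2
      rw [h2, Nat.add_sub_cancel]
    have hdiv1 : 1 ≤ m i.succ / r i := (Nat.one_le_div_iff (hr i)).mpr hi
    have hsplit : ∀ f : Fin n → ℕ,
        (∑ j, f j) = f i + ∑ j ∈ Finset.univ.erase i, f j :=
      fun f => (Finset.add_sum_erase _ f (Finset.mem_univ i)).symm
    have herase : ∀ g' g : Fin n → ℕ, (∀ j ∈ Finset.univ.erase i, g' j = g j) →
        (∑ j ∈ Finset.univ.erase i, g' j) = ∑ j ∈ Finset.univ.erase i, g j :=
      fun g' g h => Finset.sum_congr rfl h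
    -- NF equality
    have hNF : NF r m' = NF r m := by
      ext j
      refine Fin.cases ?_ ?_ j
      · rw [NF_apply_zero, NF_apply_zero, hv0]
        rw [hsplit (fun j => m' j.succ / r j), hsplit (fun j => m j.succ / r j)]
        rw [herase _ _ (fun j hj => by rw [hvj j (Finset.mem_erase.mp hj).1])]
        rw [hvi, hdivsub]
        omega
      · intro j
        rw [NF_apply_succ, NF_apply_succ]
        by_cases hj : j = i
        · subst hj
          rw [hvi]
          conv_rhs => rw [← Nat.sub_add_cancel hi]
          rw [Nat.add_mod_right]
        · rw [hvj j hj]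
    -- membership of the step
    have hstep : (monomial m (1 : k) : MvPolynomial (Fin (n + 1)) k) - monomial m' 1
        = monomial m1 1 * ((X i.succ : MvPolynomial (Fin (n + 1)) k) ^ r i - X 0) := by
      rw [mul_sub, X_pow_eq_monomial, X, monomial_mul, monomial_mul, hm1add]
      rw [mul_one]
    -- measure decreases
    have hmeas : (∑ j : Fin n, m' j.succ) < N := by
      rw [hsplit (fun j => m' j.succ),
        herase _ _ (fun j hj => by rw [hvj j (Finset.mem_erase.mp hj).1]), hvi]
      have : (∑ j : Fin n, m j.succ) = m i.succ + ∑ j ∈ Finset.univ.erase i, m j.succ :=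
        hsplit (fun j => m j.succ)
      have hri : 0 < r i := hr i
      omega
    have hrec := ih _ hmeas m' rfl
    have : (monomial m (1 : k) : MvPolynomial (Fin (n + 1)) k) - monomial (NF r m) 1
        = ((monomial m (1 : k) : MvPolynomial (Fin (n + 1)) k) - monomial m' 1)
          + ((monomial m' (1 : k) : MvPolynomial (Fin (n + 1)) k) - monomial (NF r m') 1) := by
      rw [hNF]; ring
    rw [this, hstep]
    exact add_mem (Ideal.mul_mem_left _ _ (Ideal.subset_span ⟨i, rfl⟩)) hrec

/-- the reduced representative -/
def Nred (f : MvPolynomial (Fin (n + 1)) k) : MvPolynomial (Fin (n + 1)) k :=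
  ∑ m ∈ f.support, monomial (NF r m) (coeff m f)

include hr in
lemma sub_Nred_mem (f : MvPolynomial (Fin (n + 1)) k) : f - Nred r f ∈ II k r := by
  classical
  have expand : ∑ m ∈ f.support,
      (C (coeff m f) * ((monomial m (1:k)) - monomial (NF r m) 1)) = f - Nred r f := by
    have hterm : ∀ m ∈ f.support, C (coeff m f) * ((monomial m (1:k)) - monomial (NF r m) 1)
        = monomial m (coeff m f) - monomial (NF r m) (coeff m f) := by
      intro m _
      rw [mul_sub, C_mul_monomial, C_mul_monomial, mul_one]
    rw [Finset.sum_congr rfl hterm, Finset.sum_sub_distrib, ← as_sum f, Nred]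
  rw [← expand]
  exact Ideal.sum_mem _ fun m _ => Ideal.mul_mem_left _ _ (red_mem r hr m)

include hr in
lemma Nred_supp (f : MvPolynomial (Fin (n + 1)) k) :
    ∀ m ∈ (Nred r f).support, ∀ i : Fin n, m i.succ < r i := by
  classical
  intro m hm i
  have hs : m ∈ Finset.biUnion f.support
      (fun m' => (monomial (NF r m') (coeff m' f)).support) := by
    exact Finset.mem_of_subset (MvPolynomial.support_sum) hm
  obtain ⟨m', -, hm'⟩ := Finset.mem_biUnion.mp hs
  have : m = NF r m' := by
    have := MvPolynomial.support_monomial_subset hm'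
    simpa using this
  rw [this, NF_apply_succ]
  exact Nat.mod_lt _ (hr i)

lemma PP_prime (η : GG k r) : (PP r η).IsPrime := RingHom.ker_isPrime _

include hr in
lemma mem_II_of_forall [IsAlgClosed k] (hchar : ∀ i, ¬ (ringChar k ∣ r i))
    (f : MvPolynomial (Fin (n + 1)) k) (hker : ∀ η : GG k r, psi r η f = 0) :
    f ∈ II k r := by
  have h1 : f - Nred r f ∈ II k r := sub_Nred_mem r hr f
  have h2 : ∀ η : GG k r, psi r η (Nred r f) = 0 := by
    intro η
    have h3 : psi r η (f - Nred r f) = 0 := (RingHom.mem_ker).mp (II_le_PP r η h1)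
    rw [map_sub, hker η, zero_sub, neg_eq_zero] at h3
    exact h3
  have h3 : Nred r f = 0 := vanish r hr hchar _ (Nred_supp r hr f) h2
  have h4 : f = f - Nred r f := by rw [h3, sub_zero]
  rw [h4]
  exact h1

/-- scaling action of the `R`-th roots of unity -/
def act (ζ : rootsOfUnity (RR r) k) (η : GG k r) : GG k r := fun i =>
  ⟨(ζ : kˣ) ^ dd r i * (η i : kˣ), by
    rw [mem_rootsOfUnity, mul_pow, ← pow_mul, dd_mul_r]
    rw [(mem_rootsOfUnity _ _).mp ζ.2, (mem_rootsOfUnity _ _).mp (η i).2, one_mul]⟩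

/-- rescaling of the affine line -/
def resc (ζ : rootsOfUnity (RR r) k) : Polynomial k →ₐ[k] Polynomial k :=
  Polynomial.aeval (Polynomial.C (((ζ : kˣ) : k)) * Polynomial.X)

lemma resc_inj (ζ : rootsOfUnity (RR r) k) : Function.Injective (resc r ζ) := by
  have hcomp : (resc r ζ⁻¹).comp (resc r ζ) = AlgHom.id k (Polynomial k) := by
    apply Polynomial.algHom_ext
    rw [AlgHom.comp_apply, AlgHom.id_apply]
    simp only [resc, Polynomial.aeval_X, map_mul, Polynomial.aeval_C, Polynomial.algebraMap_eq]
    rw [← mul_assoc, ← map_mul]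
    have : ((ζ : kˣ) : k) * (((ζ⁻¹ : rootsOfUnity (RR r) k) : kˣ) : k) = 1 := by
      rw [← Units.val_mul]
      norm_cast
      rw [mul_inv_cancel]
      rfl
    rw [this]
    simp
  intro a b hab
  have := congrArg (resc r ζ⁻¹) hab
  rwa [← AlgHom.comp_apply, ← AlgHom.comp_apply, hcomp, AlgHom.id_apply, AlgHom.id_apply] at this

lemma resc_comp_psi (ζ : rootsOfUnity (RR r) k) (η : GG k r) :
    (resc r ζ).comp (psi r η) = psi r (act r ζ η) := by
  apply MvPolynomial.algHom_ext
  intro j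
  refine Fin.cases ?_ ?_ j
  · rw [AlgHom.comp_apply, psi_X0, psi_X0, map_pow]
    rw [resc, Polynomial.aeval_X, mul_pow, ← Polynomial.C_pow]
    have : (((ζ : kˣ) : k)) ^ RR r = 1 := by
      have h := (mem_rootsOfUnity _ _).mp ζ.2
      have h2 := congrArg Units.val h
      push_cast at h2
      simpa using h2
    rw [this]
    simp
  · intro i
    rw [AlgHom.comp_apply, psi_Xsucc, psi_Xsucc, map_mul, map_pow]
    rw [resc, Polynomial.aeval_C, Polynomial.aeval_X, mul_pow, ← Polynomial.C_pow]
    have : ((act r ζ η i : kˣ) : k) = (((ζ : kˣ) : k)) ^ dd r i * ((η i : kˣ) : k) := by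
      rw [act]
      push_cast
      ring
    rw [this, map_mul]
    simp only [Polynomial.algebraMap_eq]
    ring

lemma PP_act (ζ : rootsOfUnity (RR r) k) (η : GG k r) : PP r (act r ζ η) = PP r η := by
  ext f
  simp only [PP, RingHom.mem_ker]
  have h1 : psi r (act r ζ η) f = resc r ζ (psi r η f) := by
    rw [← resc_comp_psi, AlgHom.comp_apply]
  rw [h1]
  constructor
  · intro h
    apply resc_inj r ζ
    rw [h, map_zero]
  · intro h
    rw [h, map_zero]

lemma psi_prod_pow (η : GG k r) (b : Fin n → ℕ) :
    psi r η (∏ i, (X i.succ : MvPolynomial (Fin (n + 1)) k) ^ b i)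
      = Polynomial.C (∏ i, ((η i : kˣ) : k) ^ b i)
        * Polynomial.X ^ (∑ i : Fin n, dd r i * b i) := by
  rw [map_prod]
  have : ∀ i : Fin n, psi r η ((X i.succ : MvPolynomial (Fin (n + 1)) k) ^ b i)
      = Polynomial.C (((η i : kˣ) : k) ^ b i) * Polynomial.X ^ (dd r i * b i) := by
    intro i
    rw [map_pow, psi_Xsucc, mul_pow, ← Polynomial.C_pow, ← pow_mul]
  rw [Finset.prod_congr rfl fun i _ => this i, Finset.prod_mul_distrib, ← map_prod,
    ← Finset.prod_pow_eq_pow_sum]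

lemma psi_C (η : GG k r) (c : k) : psi r η (C c) = Polynomial.C c := by
  rw [← MvPolynomial.algebraMap_eq, AlgHom.commutes, Polynomial.algebraMap_eq]

lemma coe_prod_pow (θ : GG k r) (b : Fin n → ℕ) :
    ((∏ i, (θ i : kˣ) ^ b i : kˣ) : k) = ∏ i, ((θ i : kˣ) : k) ^ b i := by
  norm_cast

include hn hr in
lemma exists_act_of_le {η η' : GG k r} (hle : PP r η ≤ PP r η') :
    ∃ ζ : rootsOfUnity (RR r) k, η' = act r ζ η := by
  classical
  have hkey : ∀ b : Fin n → ℕ, (∑ i : Fin n, dd r i * b i) % RR r = 0 →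
      (∏ i, (η' i : kˣ) ^ b i) = ∏ i, (η i : kˣ) ^ b i := by
    intro b hb
    obtain ⟨a, ha⟩ : RR r ∣ ∑ i : Fin n, dd r i * b i := Nat.dvd_of_mod_eq_zero hb
    set g : MvPolynomial (Fin (n + 1)) k :=
      (∏ i, (X i.succ : MvPolynomial (Fin (n + 1)) k) ^ b i)
        - C (∏ i, ((η i : kˣ) : k) ^ b i) * (X 0) ^ a with hg
    have hgη : psi r η g = 0 := by
      rw [hg, map_sub, psi_prod_pow, map_mul, map_pow, psi_X0, ← pow_mul, psi_C, ← ha,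
        sub_self]
    have hgη' : psi r η' g = 0 := (RingHom.mem_ker).mp (hle ((RingHom.mem_ker).mpr hgη))
    rw [hg, map_sub, psi_prod_pow, map_mul, map_pow, psi_X0, ← pow_mul, psi_C, ← ha] at hgη'
    have hzero : (Polynomial.C ((∏ i, ((η' i : kˣ) : k) ^ b i)
        - ∏ i, ((η i : kˣ) : k) ^ b i))
        * Polynomial.X ^ (∑ i : Fin n, dd r i * b i) = 0 := by
      rw [map_sub, sub_mul]
      exact hgη'
    have hc : (∏ i, ((η' i : kˣ) : k) ^ b i) - (∏ i, ((η i : kˣ) : k) ^ b i) = 0 := by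
      rcases mul_eq_zero.mp hzero with h | h
      · exact (Polynomial.C_eq_zero).mp h
      · exact absurd h (pow_ne_zero _ Polynomial.X_ne_zero)
    apply Units.ext
    rw [coe_prod_pow, coe_prod_pow]
    exact sub_eq_zero.mp hc
  obtain ⟨bs, hbs⟩ := exists_bstar r hn hr
  set ρ : Fin n → kˣ := fun i => η' i * (η i)⁻¹ with hρ
  have hρr : ∀ i, ρ i ^ r i = 1 := by
    intro i
    rw [hρ]
    show ((η' i : kˣ) * (η i : kˣ)⁻¹) ^ r i = 1
    rw [mul_pow, (mem_rootsOfUnity _ _).mp (η' i).2, inv_pow,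
      (mem_rootsOfUnity _ _).mp (η i).2]
    simp
  have hrho : ∀ b : Fin n → ℕ, (∑ i : Fin n, dd r i * b i) % RR r = 0 →
      (∏ i, ρ i ^ b i) = 1 := by
    intro b hb
    have h1 := hkey b hb
    have h2 : (∏ i, ρ i ^ b i)
        = (∏ i, (η' i : kˣ) ^ b i) * (∏ i, (η i : kˣ) ^ b i)⁻¹ := by
      rw [← Finset.prod_inv_distrib, ← Finset.prod_mul_distrib]
      refine Finset.prod_congr rfl fun i _ => ?_
      rw [hρ]
      show ((η' i : kˣ) * (η i : kˣ)⁻¹) ^ b i = _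
      rw [mul_pow, inv_pow]
    rw [h2, h1, mul_inv_cancel]
  set ζu : kˣ := ∏ i, ρ i ^ bs i with hζu
  have hζR : ζu ^ RR r = 1 := by
    have hmod : (∑ i : Fin n, dd r i * (RR r * bs i)) % RR r = 0 := by
      have : (∑ i : Fin n, dd r i * (RR r * bs i))
          = RR r * ∑ i : Fin n, dd r i * bs i := by
        rw [Finset.mul_sum]
        exact Finset.sum_congr rfl fun i _ => by ring
      rw [this, Nat.mul_mod_right]
    have h1 := hrho (fun i => RR r * bs i) hmod
    calc ζu ^ RR r = ∏ i, (ρ i ^ bs i) ^ RR r := by rw [hζu, ← Finset.prod_pow]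
      _ = ∏ i, ρ i ^ (RR r * bs i) := by
          refine Finset.prod_congr rfl fun i _ => ?_
          rw [← pow_mul, mul_comm]
      _ = 1 := h1
  have hζd : ∀ i, ρ i = ζu ^ dd r i := by
    intro i
    set b : Fin n → ℕ := fun j => dd r i * bs j + (if j = i then r i - 1 else 0) with hb
    have hmod : (∑ j : Fin n, dd r j * b j) % RR r = 0 := by
      have hsum : (∑ j : Fin n, dd r j * b j)
          = dd r i * (∑ j : Fin n, dd r j * bs j) + dd r i * (r i - 1) := by
        have hterm : ∀ j : Fin n, dd r j * b j
            = dd r i * (dd r j * bs j) + (if j = i then dd r i * (r i - 1) else 0) := by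
          intro j
          rw [hb]
          by_cases hj : j = i
          · subst hj; simp only [eq_self_iff_true, if_true]; ring
          · simp only [if_neg hj]; ring
        rw [Finset.sum_congr rfl fun j _ => hterm j, Finset.sum_add_distrib, ← Finset.mul_sum,
          Finset.sum_ite_eq' Finset.univ i (fun _ => dd r i * (r i - 1))]
        simp
      have h2 : dd r i * (∑ j : Fin n, dd r j * bs j) ≡ dd r i * 1 [MOD RR r] :=
        hbs.mul_left (dd r i)
      have h3 : (∑ j : Fin n, dd r j * b j)
          ≡ dd r i * 1 + dd r i * (r i - 1) [MOD RR r] := by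
        rw [hsum]
        exact h2.add_right _
      have h4 : dd r i * 1 + dd r i * (r i - 1) = RR r := by
        have h5 : 1 + (r i - 1) = r i := by have := hr i; omega
        rw [← Nat.left_distrib, h5, dd_mul_r]
      rw [h4] at h3
      have h6 : RR r % RR r = 0 := Nat.mod_self _
      have h7 := h3.trans (Nat.ModEq.refl _)
      show (∑ j : Fin n, dd r j * b j) % RR r = 0
      rw [Nat.ModEq] at h7
      omega
    have h1 := hrho b hmod
    have hsplit : (∏ j, ρ j ^ b j) = ζu ^ dd r i * ρ i ^ (r i - 1) := by
      have hterm : ∀ j : Fin n, ρ j ^ b j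
          = (ρ j ^ bs j) ^ dd r i * (if j = i then ρ j ^ (r i - 1) else 1) := by
        intro j
        rw [hb]
        show ρ j ^ (dd r i * bs j + (if j = i then r i - 1 else 0)) = _
        rw [pow_add]
        congr 1
        · rw [← pow_mul, mul_comm (bs j) (dd r i)]
        · by_cases hj : j = i
          · rw [if_pos hj, if_pos hj]
          · rw [if_neg hj, if_neg hj, pow_zero]
      rw [Finset.prod_congr rfl fun j _ => hterm j, Finset.prod_mul_distrib,
        ← Finset.prod_pow, Finset.prod_ite_eq' Finset.univ i (fun j => ρ j ^ (r i - 1))]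
      simp [hζu]
    rw [hsplit] at h1
    have h3 : ρ i ^ (r i - 1) * ρ i = 1 := by
      rw [← pow_succ, (by have := hr i; omega : r i - 1 + 1 = r i), hρr i]
    have h2 : ζu ^ dd r i * ρ i ^ (r i - 1) * ρ i = ρ i := by rw [h1, one_mul]
    rw [mul_assoc, h3, mul_one] at h2
    exact h2.symm
  refine ⟨⟨ζu, (mem_rootsOfUnity _ _).mpr hζR⟩, funext fun i => Subtype.ext ?_⟩
  show (η' i : kˣ) = ζu ^ dd r i * (η i : kˣ)
  rw [← hζd i, hρ]
  show (η' i : kˣ) = (η' i : kˣ) * (η i : kˣ)⁻¹ * (η i : kˣ)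
  rw [inv_mul_cancel_right]

include hn hr in
lemma act_injective (η : GG k r) {ζ ζ' : rootsOfUnity (RR r) k}
    (h : act r ζ η = act r ζ' η) : ζ = ζ' := by
  have hval : ∀ i, (ζ : kˣ) ^ dd r i * (η i : kˣ) = (ζ' : kˣ) ^ dd r i * (η i : kˣ) := by
    intro i
    have := congrFun h i
    exact congrArg (fun x => ((x : rootsOfUnity (r i) k) : kˣ)) this
  have hpow : ∀ i, ((ζ : kˣ) * (ζ' : kˣ)⁻¹) ^ dd r i = 1 := by
    intro i
    have heq := mul_right_cancel (hval i)
    rw [mul_pow, inv_pow, heq, mul_inv_cancel]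
  have hord : orderOf ((ζ : kˣ) * (ζ' : kˣ)⁻¹) ∣ Finset.univ.gcd (dd r) :=
    Finset.dvd_gcd fun i _ => orderOf_dvd_of_pow_eq_one (hpow i)
  rw [gcd_dd r hn hr] at hord
  have h1 : (ζ : kˣ) * (ζ' : kˣ)⁻¹ = 1 := orderOf_eq_one_iff.mp (Nat.dvd_one.mp hord)
  exact Subtype.ext (mul_inv_eq_one.mp h1)

include hn hr in
lemma minimalPrimes_II [IsAlgClosed k] (hchar : ∀ i, ¬ (ringChar k ∣ r i)) :
    (II k r).minimalPrimes = Set.range (PP r) := by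
  classical
  haveI : ∀ i, NeZero (r i) := fun i => NeZero.of_pos (hr i)
  haveI : ∀ i, Fintype (rootsOfUnity (r i) k) := fun i => Fintype.ofFinite _
  have hexists : ∀ q : Ideal (MvPolynomial (Fin (n + 1)) k), q.IsPrime → II k r ≤ q →
      ∃ η : GG k r, PP r η ≤ q := by
    intro q hq hIq
    have hinf : (Finset.univ.inf (PP r) : Ideal (MvPolynomial (Fin (n + 1)) k)) ≤ q := by
      refine le_trans ?_ hIq
      intro f hf
      refine mem_II_of_forall r hr hchar f fun η => ?_
      have h2 : (Finset.univ.inf (PP r) : Ideal (MvPolynomial (Fin (n + 1)) k)) ≤ PP r η :=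
        Finset.inf_le (Finset.mem_univ η)
      exact (RingHom.mem_ker).mp (h2 hf)
    obtain ⟨η, -, hη⟩ := (Ideal.IsPrime.inf_le' hq).mp hinf
    exact ⟨η, hη⟩
  ext q
  constructor
  · rintro ⟨⟨hq1, hq2⟩, hqmin⟩
    obtain ⟨η, hη⟩ := hexists q hq1 hq2
    have hq3 : q ≤ PP r η := hqmin ⟨PP_prime r η, II_le_PP r η⟩ hη
    exact ⟨η, (le_antisymm hη hq3)⟩
  · rintro ⟨η, rfl⟩
    refine ⟨⟨PP_prime r η, II_le_PP r η⟩, ?_⟩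
    rintro q ⟨hq1, hq2⟩ hle
    obtain ⟨η', hη'⟩ := hexists q hq1 hq2
    have h1 : PP r η' ≤ PP r η := hη'.trans hle
    obtain ⟨ζ, rfl⟩ := exists_act_of_le r hn hr h1
    rw [PP_act]
    exact hη'

include hn hr in
lemma ncard_range_PP [IsAlgClosed k] (hchar : ∀ i, ¬ (ringChar k ∣ r i)) :
    (Set.range (PP r : GG k r → Ideal (MvPolynomial (Fin (n + 1)) k))).ncard
      = (∏ i, r i) / RR r := by
  classical
  haveI : ∀ i, NeZero (r i) := fun i => NeZero.of_pos (hr i)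
  haveI : ∀ i, Fintype (rootsOfUnity (r i) k) := fun i => Fintype.ofFinite _
  have hcharR : ¬ (ringChar k ∣ RR r) := by
    rcases CharP.char_is_prime_or_zero k (ringChar k) with hp | h0
    · intro hdvd
      have h1 : ringChar k ∣ ∏ i, r i :=
        hdvd.trans (Finset.lcm_dvd fun i _ => Finset.dvd_prod_of_mem r (Finset.mem_univ i))
      obtain ⟨i, -, hi⟩ := (Nat.Prime.prime hp).exists_mem_finset_dvd h1
      exact hchar i hi
    · rw [h0]
      intro h
      exact (RR_pos r hr).ne' (zero_dvd_iff.mp h)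
  haveI : NeZero (RR r) := NeZero.of_pos (RR_pos r hr)
  haveI : Fintype (rootsOfUnity (RR r) k) := Fintype.ofFinite _
  haveI : NeZero ((RR r : k)) := ⟨fun hc => hcharR ((ringChar.spec k _).mp hc)⟩
  haveI : ∀ i, NeZero ((r i : k)) := fun i => ⟨fun hc => hchar i ((ringChar.spec k _).mp hc)⟩
  have hcardR : Fintype.card (rootsOfUnity (RR r) k) = RR r := by
    obtain ⟨ζ, hζ⟩ := HasEnoughRootsOfUnity.exists_primitiveRoot k (RR r)
    rw [← Nat.card_eq_fintype_card]
    exact hζ.card_rootsOfUnity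
  have hG : Fintype.card (GG k r) = ∏ i, r i := by
    rw [Fintype.card_pi]
    refine Finset.prod_congr rfl fun i _ => ?_
    obtain ⟨ζ, hζ⟩ := HasEnoughRootsOfUnity.exists_primitiveRoot k (r i)
    rw [← Nat.card_eq_fintype_card]
    exact hζ.card_rootsOfUnity
  set T : Finset (Ideal (MvPolynomial (Fin (n + 1)) k)) :=
    Finset.image (fun η : GG k r => PP r η) Finset.univ with hT
  have hfib : ∀ p ∈ T, (Finset.univ.filter (fun η : GG k r => PP r η = p)).card = RR r := by
    intro p hp
    obtain ⟨η₀, -, rfl⟩ := Finset.mem_image.mp hp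
    rw [← hcardR, ← Finset.card_univ]
    refine (Finset.card_bij (fun (ζ : rootsOfUnity (RR r) k) _ => act r ζ η₀) ?_ ?_ ?_).symm
    · intro ζ _
      rw [Finset.mem_filter]
      exact ⟨Finset.mem_univ _, PP_act r ζ η₀⟩
    · intro ζ _ ζ' _ h
      exact act_injective r hn hr η₀ h
    · intro η hη
      rw [Finset.mem_filter] at hη
      have h1 : PP r η₀ ≤ PP r η := hη.2.symm.le
      obtain ⟨ζ, rfl⟩ := exists_act_of_le r hn hr h1
      exact ⟨ζ, Finset.mem_univ _, rfl⟩
  have hcount : Fintype.card (GG k r) = T.card * RR r := by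
    rw [← Finset.card_univ,
      Finset.card_eq_sum_card_fiberwise
        (f := fun η : GG k r => PP r η) (t := T)
        (fun η _ => Finset.mem_image_of_mem _ (Finset.mem_univ η)),
      Finset.sum_congr rfl hfib, Finset.sum_const, smul_eq_mul]
  have hrange : Set.range (PP r : GG k r → Ideal (MvPolynomial (Fin (n + 1)) k)) = ↑T := by
    rw [hT, Finset.coe_image, Finset.coe_univ, Set.image_univ]
  rw [hrange, Set.ncard_coe_finset]
  rw [← hG, hcount, Nat.mul_div_cancel _ (RR_pos r hr)]

lemma image_mem_irreducibleComponents {X Y : Type*} [TopologicalSpace X] [TopologicalSpace Y]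
    (e : X ≃ₜ Y) {s : Set X} (hs : s ∈ irreducibleComponents X) :
    e '' s ∈ irreducibleComponents Y := by
  constructor
  · exact hs.1.image e e.continuous.continuousOn
  · intro t ht hsub
    have h1 : IsIrreducible (e.symm '' t) := ht.image _ e.symm.continuous.continuousOn
    have h2 : s ≤ e.symm '' t := by
      have h3 := Set.image_mono (f := e.symm) hsub
      rwa [← Set.image_comp, (by ext x; simp : (⇑e.symm ∘ ⇑e) '' s = s)] at h3
    have h3 := hs.2 h1 h2
    have h4 : e '' (e.symm '' t) = t := by
      rw [← Set.image_comp]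
      ext x; simp
    calc t = e '' (e.symm '' t) := h4.symm
      _ ⊆ e '' s := Set.image_mono h3

lemma ncard_irreducibleComponents_congr {X Y : Type*} [TopologicalSpace X] [TopologicalSpace Y]
    (e : X ≃ₜ Y) :
    (irreducibleComponents X).ncard = (irreducibleComponents Y).ncard := by
  have hset : irreducibleComponents Y = (Set.image e) '' (irreducibleComponents X) := by
    ext t
    constructor
    · intro ht
      refine ⟨e.symm '' t, image_mem_irreducibleComponents e.symm ht, ?_⟩
      rw [← Set.image_comp]
      ext x; simp
    · rintro ⟨s, hs, rfl⟩
      exact image_mem_irreducibleComponents e hs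
  rw [hset, Set.ncard_image_of_injective _ (Set.image_injective.mpr e.injective)]

end

end CardFiberCurveAux

open CardFiberCurveAux

/-- Let `k` be an algebraically closed field, `n ≥ 1`, and `r₁, …, rₙ` positive integers
coprime to the characteristic of `k`.  Let `R = lcm(r₁, …, rₙ)` and let
`C ⊆ 𝔸^{n+1}` be the affine scheme defined by the equations `yᵢ^{rᵢ} = x`
(realized as the vanishing locus, in the prime spectrum of the polynomial ring
`k[x, y₁, …, yₙ]`, of the ideal generated by the `yᵢ^{rᵢ} - x`).
Then `C` has exactly `(r₁ ⋯ rₙ) / R` irreducible components. -/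
theorem card_irreducibleComponents_fiber_curve
    {k : Type*} [Field k] [IsAlgClosed k] {n : ℕ} (hn : 0 < n)
    (r : Fin n → ℕ) (hr : ∀ i, 0 < r i) (hchar : ∀ i, ¬ (ringChar k ∣ r i)) :
    (irreducibleComponents
        (PrimeSpectrum.zeroLocus
          ((Ideal.span (Set.range fun i : Fin n =>
            (X i.succ : MvPolynomial (Fin (n + 1)) k) ^ r i - X 0) :
              Ideal (MvPolynomial (Fin (n + 1)) k)) : Set (MvPolynomial (Fin (n + 1)) k)))).ncard =
      (∏ i, r i) / Finset.univ.lcm r := by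
  classical
  show (irreducibleComponents
      (PrimeSpectrum.zeroLocus ((II k r : Ideal (MvPolynomial (Fin (n + 1)) k))
        : Set (MvPolynomial (Fin (n + 1)) k)))).ncard = (∏ i, r i) / RR r
  set A := MvPolynomial (Fin (n + 1)) k with hA
  have hsurj : Function.Surjective (Ideal.Quotient.mk (II k r)) := Ideal.Quotient.mk_surjective
  have hemb := PrimeSpectrum.isClosedEmbedding_comap_of_surjective _ _ hsurj
  have hrange : Set.range (PrimeSpectrum.comap (Ideal.Quotient.mk (II k r)))
      = PrimeSpectrum.zeroLocus ((II k r : Ideal A) : Set A) := by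
    rw [range_comap_of_surjective _ _ hsurj, Ideal.mk_ker]
  let e : PrimeSpectrum (A ⧸ (II k r : Ideal A))
      ≃ₜ (PrimeSpectrum.zeroLocus ((II k r : Ideal A) : Set A)) :=
    (hemb.toIsEmbedding.toHomeomorph).trans (Homeomorph.setCongr hrange)
  have h1 := (ncard_irreducibleComponents_congr e).symm
  rw [h1]
  have h2 : (irreducibleComponents (PrimeSpectrum (A ⧸ (II k r : Ideal A)))).ncard
      = (minimalPrimes (A ⧸ (II k r : Ideal A))).ncard := by
    rw [← Nat.card_coe_set_eq, ← Nat.card_coe_set_eq]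
    exact (Nat.card_congr ((minimalPrimes.equivIrreducibleComponents
      (A ⧸ (II k r : Ideal A))).toEquiv.trans OrderDual.ofDual)).symm
  rw [h2]
  have h3 : ((II k r : Ideal A).minimalPrimes).ncard
      = (minimalPrimes (A ⧸ (II k r : Ideal A))).ncard := by
    rw [Ideal.minimalPrimes_eq_comap,
      Set.ncard_image_of_injective _ (Ideal.comap_injective_of_surjective _ hsurj)]
  rw [← h3, minimalPrimes_II r hn hr hchar, ncard_range_PP r hn hr hchar]
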